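/- Let f₁, f₂ : ℝ → ℝ be 2π-periodic measurable functions with values in (0, 1], and suppose there exists β ∈ ℝ such that sup_{θ ∈ [0, 2π)} |f₁(θ) − f₂(θ + β)| ≤ ε. Let ψ₁, ψ₂ be the continuous signatures of f₁, f₂ with Φ(z) = exp(−z). Then ( (1/(2π)) ∫₀^{2π} (ψ₁(α) − ψ₂(α))² dα )^{1/2} ≤ 2eε, where e is Euler's number. -/

import Mathlib

open MeasureTheory Real

/-- The continuous signature of `f` with respect to `Φ`:
`ψ_f(α) = (1/(2π)) ∫₀^{2π} Φ(f(θ) − f(θ + α)) dθ`. -/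
noncomputable def psi (Φ f : ℝ → ℝ) (α : ℝ) : ℝ :=
  (1 / (2 * π)) * ∫ θ in (0:ℝ)..(2 * π), Φ (f θ - f (θ + α))

private lemma exp_lip {x y : ℝ} (hx : x ≤ 1) (hy : y ≤ 1) :
    |Real.exp x - Real.exp y| ≤ Real.exp 1 * |x - y| := by
  have key : ∀ a b : ℝ, a ≤ 1 → b ≤ 1 →
      Real.exp a - Real.exp b ≤ Real.exp 1 * |a - b| := by
    intro a b ha hb
    rcases le_total a b with h | h
    · have h1 : Real.exp a - Real.exp b ≤ 0 :=
        sub_nonpos.2 (Real.exp_le_exp.2 h)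
      have h2 : (0:ℝ) ≤ Real.exp 1 * |a - b| := by positivity
      linarith
    · have h1 : Real.exp b = Real.exp a * Real.exp (b - a) := by
        rw [← Real.exp_add]; ring_nf
      have h2 : 1 + (b - a) ≤ Real.exp (b - a) := by
        linarith [Real.add_one_le_exp (b - a)]
      have h3 : Real.exp a ≤ Real.exp 1 := Real.exp_le_exp.2 ha
      have h4 : (0:ℝ) < Real.exp a := Real.exp_pos _
      have h5 : |a - b| = a - b := abs_of_nonneg (by linarith)
      rw [h5]
      nlinarith
  rcases le_total (Real.exp x) (Real.exp y) with h | h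
  · rw [abs_sub_comm, abs_of_nonneg (by linarith), abs_sub_comm x y]
    exact key y x hy hx
  · rw [abs_of_nonneg (by linarith)]
    exact key x y hx hy

private lemma integrand_integrable {f : ℝ → ℝ} (hm : Measurable f)
    (hr : ∀ θ, f θ ∈ Set.Ioc (0:ℝ) 1) (α a b : ℝ) :
    IntervalIntegrable (fun θ => Real.exp (-(f θ - f (θ + α)))) volume a b := by
  have hmeas : Measurable fun θ => Real.exp (-(f θ - f (θ + α))) :=
    ((hm.sub (hm.comp (measurable_id.add_const α))).neg).exp
  rw [intervalIntegrable_iff]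
  apply MeasureTheory.Integrable.mono' (g := fun _ => Real.exp 1)
    ((integrableOn_const_iff (C := Real.exp 1)).mpr (Or.inr (by rw [Set.uIoc]; exact measure_Ioc_lt_top)))
    hmeas.aestronglyMeasurable
  filter_upwards with θ
  rw [Real.norm_eq_abs, abs_of_pos (Real.exp_pos _)]
  apply Real.exp_le_exp.2
  have h1 := hr θ
  have h2 := hr (θ + α)
  simp only [Set.mem_Ioc] at h1 h2
  linarith

/-- Pointwise bound on the difference of signatures. -/
private lemma psi_diff_bound {f g : ℝ → ℝ}
    (hmf : Measurable f) (hmg : Measurable g)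
    (hrf : ∀ θ, f θ ∈ Set.Ioc (0:ℝ) 1) (hrg : ∀ θ, g θ ∈ Set.Ioc (0:ℝ) 1)
    {ε : ℝ} (hfg : ∀ θ, |f θ - g θ| ≤ ε) (α : ℝ) :
    |psi (fun z => Real.exp (-z)) f α - psi (fun z => Real.exp (-z)) g α|
      ≤ 2 * Real.exp 1 * ε := by
  have hπ : (0:ℝ) < 2 * π := by positivity
  have hIf := integrand_integrable hmf hrf α 0 (2 * π)
  have hIg := integrand_integrable hmg hrg α 0 (2 * π)
  have hsplit : psi (fun z => Real.exp (-z)) f α - psi (fun z => Real.exp (-z)) g α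
      = (1 / (2 * π)) * ∫ θ in (0:ℝ)..(2 * π),
          (Real.exp (-(f θ - f (θ + α))) - Real.exp (-(g θ - g (θ + α)))) := by
    rw [intervalIntegral.integral_sub hIf hIg]
    unfold psi
    ring
  rw [hsplit, abs_mul, abs_of_pos (by positivity : (0:ℝ) < 1 / (2 * π))]
  have hbound : |∫ θ in (0:ℝ)..(2 * π),
      (Real.exp (-(f θ - f (θ + α))) - Real.exp (-(g θ - g (θ + α))))|
      ≤ (2 * Real.exp 1 * ε) * |2 * π - 0| := by
    rw [← Real.norm_eq_abs]
    apply intervalIntegral.norm_integral_le_of_norm_le_const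
    intro θ _
    rw [Real.norm_eq_abs]
    have h1 := hrf θ; have h2 := hrf (θ + α)
    have h3 := hrg θ; have h4 := hrg (θ + α)
    simp only [Set.mem_Ioc] at h1 h2 h3 h4
    have hle := exp_lip (x := -(f θ - f (θ + α))) (y := -(g θ - g (θ + α)))
      (by linarith) (by linarith)
    have habs : |(-(f θ - f (θ + α))) - (-(g θ - g (θ + α)))| ≤ 2 * ε := by
      have e1 := hfg θ
      have e2 := hfg (θ + α)
      rw [abs_le] at e1 e2 ⊢
      constructor <;> [linarith [e1.1, e1.2, e2.1, e2.2]; linarith [e1.1, e1.2, e2.1, e2.2]]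
    calc |Real.exp (-(f θ - f (θ + α))) - Real.exp (-(g θ - g (θ + α)))|
        ≤ Real.exp 1 * |(-(f θ - f (θ + α))) - (-(g θ - g (θ + α)))| := hle
      _ ≤ Real.exp 1 * (2 * ε) := by
          exact mul_le_mul_of_nonneg_left habs (Real.exp_pos _).le
      _ = 2 * Real.exp 1 * ε := by ring
  have habs2π : |2 * π - 0| = 2 * π := by
    rw [sub_zero, abs_of_pos hπ]
  rw [habs2π] at hbound
  calc (1 / (2 * π)) * |∫ θ in (0:ℝ)..(2 * π),
        (Real.exp (-(f θ - f (θ + α))) - Real.exp (-(g θ - g (θ + α))))|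
      ≤ (1 / (2 * π)) * ((2 * Real.exp 1 * ε) * (2 * π)) := by
        exact mul_le_mul_of_nonneg_left hbound (by positivity)
    _ = 2 * Real.exp 1 * ε := by field_simp

/-- The signature is invariant under a shift of the function. -/
private lemma psi_shift (f : ℝ → ℝ) (hf : Function.Periodic f (2 * π)) (β α : ℝ) :
    psi (fun z => Real.exp (-z)) (fun θ => f (θ + β)) α
      = psi (fun z => Real.exp (-z)) f α := by
  unfold psi
  congr 1
  have hFper : Function.Periodic (fun u => Real.exp (-(f u - f (u + α)))) (2 * π) := by
    intro u
    simp only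
    rw [hf u, show u + 2 * π + α = u + α + 2 * π by ring, hf (u + α)]
  have h := intervalIntegral.integral_comp_add_right (a := (0:ℝ)) (b := 2 * π)
    (fun u => Real.exp (-(f u - f (u + α)))) β
  have h2 := hFper.intervalIntegral_add_eq β 0
  beta_reduce
  beta_reduce at h h2
  have e : ∀ x : ℝ, f (x + α + β) = f (x + β + α) := fun x => by ring_nf
  simp only [e]
  rw [h, zero_add, add_comm (2 * π) β, h2, zero_add]

theorem signature_lipschitz_in_star_distance
    (f₁ f₂ : ℝ → ℝ)
    (h₁ : Function.Periodic f₁ (2 * π)) (h₂ : Function.Periodic f₂ (2 * π))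
    (hm₁ : Measurable f₁) (hm₂ : Measurable f₂)
    (hr₁ : ∀ θ, f₁ θ ∈ Set.Ioc (0:ℝ) 1) (hr₂ : ∀ θ, f₂ θ ∈ Set.Ioc (0:ℝ) 1)
    (ε β : ℝ)
    (hβ : ∀ θ ∈ Set.Ico (0:ℝ) (2 * π), |f₁ θ - f₂ (θ + β)| ≤ ε) :
    Real.sqrt ((1 / (2 * π)) * ∫ α in (0:ℝ)..(2 * π),
        (psi (fun z => Real.exp (-z)) f₁ α
          - psi (fun z => Real.exp (-z)) f₂ α) ^ 2)
      ≤ 2 * Real.exp 1 * ε := by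
  have hπ : (0:ℝ) < 2 * π := by positivity
  -- ε is nonnegative
  have hε : 0 ≤ ε := le_trans (abs_nonneg _) (hβ 0 ⟨le_refl 0, hπ⟩)
  have hC : 0 ≤ 2 * Real.exp 1 * ε := by positivity
  -- extend the closeness hypothesis to all θ
  have hβ' : ∀ θ, |f₁ θ - f₂ (θ + β)| ≤ ε := by
    intro θ
    have hper : Function.Periodic (fun θ => |f₁ θ - f₂ (θ + β)|) (2 * π) := by
      intro u
      simp only
      rw [h₁ u, show u + 2 * π + β = u + β + 2 * π by ring, h₂ (u + β)]
    obtain ⟨y, hy, hey⟩ := hper.exists_mem_Ico₀ hπ θ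
    calc |f₁ θ - f₂ (θ + β)| = |f₁ y - f₂ (y + β)| := hey
      _ ≤ ε := hβ y hy
  -- the shifted f₂
  set g : ℝ → ℝ := fun θ => f₂ (θ + β) with hg
  have hmg : Measurable g := hm₂.comp (measurable_id.add_const β)
  have hrg : ∀ θ, g θ ∈ Set.Ioc (0:ℝ) 1 := fun θ => hr₂ (θ + β)
  -- pointwise bound on the difference of signatures
  have hpt : ∀ α, |psi (fun z => Real.exp (-z)) f₁ α
      - psi (fun z => Real.exp (-z)) f₂ α| ≤ 2 * Real.exp 1 * ε := by
    intro α
    rw [← psi_shift f₂ h₂ β α]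
    exact psi_diff_bound hm₁ hmg hr₁ hrg hβ' α
  -- main estimate
  by_cases hI : IntervalIntegrable (fun α =>
      (psi (fun z => Real.exp (-z)) f₁ α - psi (fun z => Real.exp (-z)) f₂ α) ^ 2)
      volume 0 (2 * π)
  · have hmono : (∫ α in (0:ℝ)..(2 * π),
        (psi (fun z => Real.exp (-z)) f₁ α - psi (fun z => Real.exp (-z)) f₂ α) ^ 2)
        ≤ ∫ _ in (0:ℝ)..(2 * π), (2 * Real.exp 1 * ε) ^ 2 := by
      apply intervalIntegral.integral_mono_on hπ.le hI intervalIntegrable_const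
      intro α _
      have := hpt α
      exact sq_le_sq' (by linarith [abs_le.1 this |>.1]) (abs_le.1 this).2
    have hconst : (∫ _ in (0:ℝ)..(2 * π), (2 * Real.exp 1 * ε) ^ 2)
        = (2 * π) * (2 * Real.exp 1 * ε) ^ 2 := by
      rw [intervalIntegral.integral_const, smul_eq_mul, sub_zero]
    rw [hconst] at hmono
    have hle : (1 / (2 * π)) * ∫ α in (0:ℝ)..(2 * π),
        (psi (fun z => Real.exp (-z)) f₁ α - psi (fun z => Real.exp (-z)) f₂ α) ^ 2
        ≤ (2 * Real.exp 1 * ε) ^ 2 := by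
      calc (1 / (2 * π)) * ∫ α in (0:ℝ)..(2 * π),
            (psi (fun z => Real.exp (-z)) f₁ α - psi (fun z => Real.exp (-z)) f₂ α) ^ 2
          ≤ (1 / (2 * π)) * ((2 * π) * (2 * Real.exp 1 * ε) ^ 2) :=
            mul_le_mul_of_nonneg_left hmono (by positivity)
        _ = (2 * Real.exp 1 * ε) ^ 2 := by field_simp
    calc Real.sqrt ((1 / (2 * π)) * ∫ α in (0:ℝ)..(2 * π),
          (psi (fun z => Real.exp (-z)) f₁ α - psi (fun z => Real.exp (-z)) f₂ α) ^ 2)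
        ≤ Real.sqrt ((2 * Real.exp 1 * ε) ^ 2) := Real.sqrt_le_sqrt hle
      _ = 2 * Real.exp 1 * ε := Real.sqrt_sq hC
  · rw [intervalIntegral.integral_undef hI]
    simpa using hC
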